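/- Let V be a real vector space, Δ ⊆ V a finite linearly independent subset, J ⊆ Δ, and 𝔸 a nonzero additive subgroup of (ℝ,+) such that a·𝔸 ⊆ 𝔸 for some nonzero a ∈ 𝔸. Suppose λ = Σ_{α∈Δ} e_α α with all e_α ∈ 𝔸 and e_α ≤ 0 for every α ∈ Δ ∖ J. Let X ⊆ λ − ℤ₊Δ be a subset with λ ∈ X and λ − α ∈ X for every α ∈ Δ. Then X ∩ (λ − ℤ₊J) is NOT a positive weak 𝔸-face of X. -/

import Mathlib

open Finsupp

/-- `R₊ := R ∩ [0,∞)`. -/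
def Rplus (R : Set ℝ) : Set ℝ := R ∩ Set.Ici 0

/-- `ℓ(f) := Σ_v f(v)`. -/
noncomputable def ell {V : Type*} [AddCommGroup V] [Module ℝ V] (f : V →₀ ℝ) : ℝ :=
  f.sum fun _ r => r

/-- `ℓ⃗(f) := Σ_v f(v) • v`. -/
noncomputable def vell {V : Type*} [AddCommGroup V] [Module ℝ V] (f : V →₀ ℝ) : V :=
  f.sum fun v r => r • v

/-- `f ∈ Fin(X,R)`: finitely supported, support in `X`, values in `R ∪ {0}`. -/
def IsFinSupp {V : Type*} [AddCommGroup V] [Module ℝ V] (X : Set V) (R : Set ℝ)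
    (f : V →₀ ℝ) : Prop :=
  ↑f.support ⊆ X ∧ ∀ v, f v ∈ R ∪ {0}

/-- `Y` is a weak `R`-face of `X`. -/
def IsWeakFace {V : Type*} [AddCommGroup V] [Module ℝ V] (X Y : Set V) (R : Set ℝ) : Prop :=
  ∀ f g : V →₀ ℝ, IsFinSupp X (Rplus R) f → IsFinSupp Y (Rplus R) g →
    ell f = ell g → 0 < ell g → vell f = vell g → ↑f.support ⊆ Y

/-- `Y` is a positive weak `R`-face of `X`. -/
def IsPosWeakFace {V : Type*} [AddCommGroup V] [Module ℝ V] (X Y : Set V) (R : Set ℝ) : Prop :=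
  ∀ f g : V →₀ ℝ, IsFinSupp X (Rplus R) f → IsFinSupp Y (Rplus R) g →
    vell f = vell g → ell g ≤ ell f ∧ (ell g = ell f ↔ ↑f.support ⊆ Y)

/-- `Y` is `(R',R)`-closed in `X`. -/
def IsRClosed {V : Type*} [AddCommGroup V] [Module ℝ V] (X Y : Set V) (R' R : Set ℝ) : Prop :=
  ∀ f g : V →₀ ℝ, IsFinSupp X R f → IsFinSupp Y R g →
    ell f = ell g → ell f ∈ R' → ell f ≠ 0 → vell f = vell g → ↑f.support ⊆ Y

/-- The maximizer set `X(φ)`. -/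
def maximizer {V : Type*} [AddCommGroup V] [Module ℝ V] (X : Set V) (φ : V →ₗ[ℝ] ℝ) : Set V :=
  {x | x ∈ X ∧ ∀ x' ∈ X, φ x' ≤ φ x}

section helpers
variable {V : Type*} [AddCommGroup V] [Module ℝ V]

lemma ell_add (f g : V →₀ ℝ) : ell (f + g) = ell f + ell g :=
  Finsupp.sum_add_index' (fun _ => rfl) (fun _ _ _ => rfl)
lemma ell_single (v : V) (r : ℝ) : ell (Finsupp.single v r) = r :=
  Finsupp.sum_single_index rfl
lemma vell_add (f g : V →₀ ℝ) : vell (f + g) = vell f + vell g :=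
  Finsupp.sum_add_index' (fun v => zero_smul ℝ v) (fun v r s => add_smul r s v)
lemma vell_single (v : V) (r : ℝ) : vell (Finsupp.single v r) = r • v :=
  Finsupp.sum_single_index (zero_smul ℝ v)
lemma ell_sum {ι : Type*} (s : Finset ι) (F : ι → (V →₀ ℝ)) :
    ell (∑ i ∈ s, F i) = ∑ i ∈ s, ell (F i) := by
  classical
  induction s using Finset.induction with
  | empty => simp [ell]
  | insert _ _ h ih => rw [Finset.sum_insert h, Finset.sum_insert h, ell_add, ih]
lemma vell_sum {ι : Type*} (s : Finset ι) (F : ι → (V →₀ ℝ)) :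
    vell (∑ i ∈ s, F i) = ∑ i ∈ s, vell (F i) := by
  classical
  induction s using Finset.induction with
  | empty => simp [vell]
  | insert _ _ h ih => rw [Finset.sum_insert h, Finset.sum_insert h, vell_add, ih]

/-- pointwise value of our standard combination -/
lemma comb_apply [DecidableEq V] (s : Finset V) (lam : V) (h0 : (0:V) ∉ s)
    (c0 : ℝ) (c : V → ℝ) (v : V) :
    (Finsupp.single lam c0 + ∑ α ∈ s, Finsupp.single (lam - α) (c α)) v
      = (if v = lam then c0 else 0) + (if lam - v ∈ s then c (lam - v) else 0) := by
  rw [Finsupp.add_apply, Finset.sum_apply']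
  congr 1
  · rw [Finsupp.single_apply]
    simp only [eq_comm]
  · rw [← Finset.sum_ite_eq' s (lam - v) c]
    refine Finset.sum_congr rfl fun α hα => ?_
    rw [Finsupp.single_apply]
    congr 1
    simp only [eq_iff_iff]
    constructor
    · rintro rfl; simp
    · rintro rfl; simp
end helpers

/-- Suppose `a·𝔸 ⊆ 𝔸` for some nonzero `a ∈ 𝔸`, and
`λ = Σ_{α∈Δ} e_α α` with all `e_α ∈ 𝔸` and `e_α ≤ 0` for `α ∈ Δ ∖ J`. If
`X ⊆ λ − ℤ₊Δ` contains `λ` and `λ − α` for every `α ∈ Δ`, then `X ∩ (λ − ℤ₊J)`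
is NOT a positive weak `𝔸`-face of `X`. -/
theorem statement18 {V : Type*} [AddCommGroup V] [Module ℝ V]
    (Δ : Finset V)
    (hind : LinearIndependent ℝ (fun x : (Δ : Set V) => (x : V)))
    (𝔸 : AddSubgroup ℝ) (h𝔸 : 𝔸 ≠ ⊥)
    (a : ℝ) (ha𝔸 : a ∈ 𝔸) (ha0 : a ≠ 0) (hmul : ∀ x ∈ 𝔸, a * x ∈ 𝔸)
    (J : Finset V) (hJ : J ⊆ Δ)
    (e : V → ℝ) (he : ∀ α ∈ Δ, e α ∈ 𝔸) (heneg : ∀ α ∈ Δ, α ∉ J → e α ≤ 0)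
    (lam : V) (hlam : lam = ∑ α ∈ Δ, e α • α)
    (X : Set V)
    (hX : X ⊆ {x : V | ∃ q ∈ AddSubmonoid.closure (Δ : Set V), x = lam - q})
    (hlamX : lam ∈ X) (hstep : ∀ α ∈ Δ, lam - α ∈ X) :
    ¬ IsPosWeakFace X
        (X ∩ {x : V | ∃ q ∈ AddSubmonoid.closure (J : Set V), x = lam - q})
        (𝔸 : Set ℝ) := by
  classical
  intro hface
  set Y : Set V := X ∩ {x : V | ∃ q ∈ AddSubmonoid.closure (J : Set V), x = lam - q} with hY
  -- 0 is not in Δ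
  have h0Δ : (0:V) ∉ Δ := by
    intro h0
    exact (hind.ne_zero ⟨0, by exact_mod_cast h0⟩) rfl
  -- t := -|a| < 0, t ∈ 𝔸, t * x ∈ 𝔸 for x ∈ 𝔸
  set t : ℝ := -|a| with ht
  have htneg : t < 0 := by
    have : 0 < |a| := abs_pos.mpr ha0
    simp only [ht]; linarith
  have htmul : ∀ x ∈ 𝔸, t * x ∈ 𝔸 := by
    intro x hx
    rcases abs_cases a with ⟨h1, _⟩ | ⟨h1, _⟩
    · rw [ht, h1, neg_mul]; exact neg_mem (hmul x hx)
    · rw [ht, h1, neg_neg]; exact hmul x hx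
  set c : V → ℝ := fun α => max (t * e α) 0 with hc
  set d : V → ℝ := fun α => max (-(t * e α)) 0 with hd
  have hcd : ∀ α, c α - d α = t * e α := fun α => max_zero_sub_eq_self _
  set m : ℝ := t - ∑ α ∈ Δ, c α + ∑ α ∈ J, d α with hm
  set c0 : ℝ := max m 0 with hc0
  set d0 : ℝ := max (-m) 0 with hd0
  have hc0d0 : c0 - d0 = m := max_zero_sub_eq_self m
  -- d vanishes outside J (on Δ)
  have hdz : ∀ α ∈ Δ, α ∉ J → d α = 0 := by
    intro α hα hαJ
    have h1 : 0 ≤ t * e α := by nlinarith [heneg α hα hαJ, htneg.le]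
    simp only [hd]
    exact max_eq_right (by linarith)
  -- membership in 𝔸
  have htA : t ∈ 𝔸 := by
    rcases abs_cases a with ⟨h1, _⟩ | ⟨h1, _⟩
    · rw [ht, h1]; exact neg_mem ha𝔸
    · rw [ht, h1, neg_neg]; exact ha𝔸
  have hmax_mem : ∀ x ∈ 𝔸, max x 0 ∈ Rplus (𝔸 : Set ℝ) ∪ {0} := by
    intro x hx
    rcases le_total x 0 with h | h
    · right; simp [max_eq_right h]
    · left; exact ⟨by simpa [max_eq_left h] using hx, by simp [max_eq_left h, h]⟩
  have hcA : ∀ α ∈ Δ, c α ∈ Rplus (𝔸 : Set ℝ) ∪ {0} :=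
    fun α hα => hmax_mem _ (htmul _ (he α hα))
  have hdA : ∀ α ∈ Δ, d α ∈ Rplus (𝔸 : Set ℝ) ∪ {0} :=
    fun α hα => hmax_mem _ (neg_mem (htmul _ (he α hα)))
  have hcmem : ∀ α ∈ Δ, c α ∈ 𝔸 := by
    intro α hα
    rcases hcA α hα with h | h
    · exact h.1
    · simp only [Set.mem_singleton_iff] at h; rw [h]; exact zero_mem _
  have hdmem : ∀ α ∈ Δ, d α ∈ 𝔸 := by
    intro α hα
    rcases hdA α hα with h | h
    · exact h.1
    · simp only [Set.mem_singleton_iff] at h; rw [h]; exact zero_mem _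
  have hmA : m ∈ 𝔸 := by
    refine add_mem (sub_mem htA (AddSubgroup.sum_mem _ hcmem)) (AddSubgroup.sum_mem _ ?_)
    exact fun α hα => hdmem α (hJ hα)
  -- the two functions
  set f : V →₀ ℝ := Finsupp.single lam c0 + ∑ α ∈ Δ, Finsupp.single (lam - α) (c α) with hf
  set g : V →₀ ℝ := Finsupp.single lam d0 + ∑ α ∈ J, Finsupp.single (lam - α) (d α) with hg
  have hfapp : ∀ v, f v = (if v = lam then c0 else 0) + (if lam - v ∈ Δ then c (lam - v) else 0) :=
    comb_apply Δ lam h0Δ c0 c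
  have h0J : (0:V) ∉ J := fun h => h0Δ (hJ h)
  have hgapp : ∀ v, g v = (if v = lam then d0 else 0) + (if lam - v ∈ J then d (lam - v) else 0) :=
    comb_apply J lam h0J d0 d
  -- value membership
  have hval : ∀ (s : Finset V) (x0 : ℝ) (x : V → ℝ), x0 ∈ Rplus (𝔸 : Set ℝ) ∪ {0} →
      (∀ α ∈ s, x α ∈ Rplus (𝔸 : Set ℝ) ∪ {0}) → (0:V) ∉ s → ∀ v : V,
      (if v = lam then x0 else 0) + (if lam - v ∈ s then x (lam - v) else 0)
        ∈ Rplus (𝔸 : Set ℝ) ∪ {0} := by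
    intro s x0 x hx0 hx h0s v
    by_cases h1 : v = lam
    · have hns : lam - v ∉ s := by rw [h1]; simpa using h0s
      rw [if_pos h1, if_neg hns, add_zero]
      exact hx0
    · simp only [if_neg h1, zero_add]
      by_cases h2 : lam - v ∈ s
      · rw [if_pos h2]; exact hx _ h2
      · rw [if_neg h2]; right; rfl
  -- IsFinSupp for f
  have hfF : IsFinSupp X (Rplus (𝔸 : Set ℝ)) f := by
    constructor
    · intro v hv
      simp only [Finset.mem_coe, Finsupp.mem_support_iff] at hv
      rw [hfapp v] at hv
      by_cases h1 : v = lam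
      · subst h1; exact hlamX
      · by_cases h2 : lam - v ∈ Δ
        · have := hstep _ h2
          simpa using this
        · simp [h1, h2] at hv
    · intro v
      rw [hfapp v]
      exact hval Δ c0 c (hmax_mem m hmA) hcA h0Δ v
  have hgF : IsFinSupp Y (Rplus (𝔸 : Set ℝ)) g := by
    constructor
    · intro v hv
      simp only [Finset.mem_coe, Finsupp.mem_support_iff] at hv
      rw [hgapp v] at hv
      by_cases h1 : v = lam
      · subst h1
        exact ⟨hlamX, 0, zero_mem _, by simp⟩
      · by_cases h2 : lam - v ∈ J
        · refine ⟨by simpa using hstep _ (hJ h2), lam - v, AddSubmonoid.subset_closure h2, by simp⟩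
        · simp [h1, h2] at hv
    · intro v
      rw [hgapp v]
      exact hval J d0 d (hmax_mem (-m) (neg_mem hmA)) (fun α hα => hdA α (hJ hα)) h0J v
  -- ell computations
  have hellf : ell f = c0 + ∑ α ∈ Δ, c α := by
    rw [hf, ell_add, ell_single, ell_sum]
    simp [ell_single]
  have hellg : ell g = d0 + ∑ α ∈ J, d α := by
    rw [hg, ell_add, ell_single, ell_sum]
    simp [ell_single]
  -- sums over J extended to Δ
  have hsumJ : ∑ α ∈ J, d α • (lam - α) = ∑ α ∈ Δ, d α • (lam - α) := by
    refine Finset.sum_subset hJ fun α hα hαJ => ?_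
    rw [hdz α hα hαJ, zero_smul]
  have hsumJ' : ∑ α ∈ J, d α = ∑ α ∈ Δ, d α := by
    refine Finset.sum_subset hJ fun α hα hαJ => hdz α hα hαJ
  -- vell computations
  have hvellf : vell f = c0 • lam + ∑ α ∈ Δ, c α • (lam - α) := by
    rw [hf, vell_add, vell_single, vell_sum]
    simp [vell_single]
  have hvellg : vell g = d0 • lam + ∑ α ∈ Δ, d α • (lam - α) := by
    rw [hg, vell_add, vell_single, vell_sum, ← hsumJ]
    simp [vell_single]
  -- key: m = t - t * ∑ e
  have hsumcd : ∑ α ∈ Δ, c α - ∑ α ∈ J, d α = t * ∑ α ∈ Δ, e α := by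
    rw [hsumJ', ← Finset.sum_sub_distrib, Finset.mul_sum]
    exact Finset.sum_congr rfl fun α _ => hcd α
  have hm' : m = t - t * ∑ α ∈ Δ, e α := by
    rw [hm, ← hsumcd]; ring
  -- vell f = vell g
  have hvell : vell f = vell g := by
    rw [hvellf, hvellg]
    have hc' : ∀ α ∈ Δ, c α • (lam - α) = d α • (lam - α) + ((t * e α) • lam - (t * e α) • α) := by
      intro α _
      rw [← smul_sub, ← add_smul]
      congr 1
      linarith [hcd α]
    rw [Finset.sum_congr rfl hc', Finset.sum_add_distrib, Finset.sum_sub_distrib,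
      ← Finset.sum_smul, ← Finset.mul_sum]
    have h2 : ∑ α ∈ Δ, (t * e α) • α = t • lam := by
      rw [hlam, Finset.smul_sum]
      exact Finset.sum_congr rfl fun α _ => by rw [smul_smul]
    rw [h2]
    have hc0' : c0 = m + d0 := by linarith [hc0d0]
    rw [hc0', hm']
    set S := ∑ α ∈ Δ, e α
    set W := ∑ α ∈ Δ, d α • (lam - α)
    rw [add_smul, sub_smul, mul_smul]
    abel
  -- contradiction via ell g ≤ ell f
  have hle := (hface f g hfF hgF hvell).1
  rw [hellf, hellg] at hle
  have : c0 + ∑ α ∈ Δ, c α - (d0 + ∑ α ∈ J, d α) = t := by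
    have h1 : c0 - d0 = m := hc0d0
    have h2 := hsumcd
    rw [hm'] at h1
    linarith [hsumJ']
  linarith
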